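/- arXiv:2601.17034 — 2 statements merged into one kernel-verified Lean document; each statement's English description precedes it below -/
import Mathlib

section
/- For vectors x₁, x₂ ∈ ℝ³ with magnitudes x₁, x₂ > 0, η > 0, and 2|x₁·x₂| < x₁² + x₂² (which always holds when x₁ ≠ x₂), one has exp(-η|x₁−x₂|)/|x₁−x₂| = Σ_{n=0}^∞ (1/√π) · ((-1)ⁿ (−x₁·x₂)ⁿ / n!) · √2 · (x₁² + x₂²)^{(−n−1/2)/2} · η^{n+1/2} · K_{n+1/2}(η√(x₁² + x₂²)). -/
open MeasureTheory Real

/-- The modified Bessel function of the second kind (Macdonald function),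
via its standard integral representation (valid for `x > 0`). -/
noncomputable def besselK (ν x : ℝ) : ℝ :=
  ∫ t in Set.Ioi (0:ℝ), Real.exp (-x * Real.cosh t) * Real.cosh (ν * t)

lemma cosh_quad (u : ℝ) : u ^ 2 / 8 ≤ Real.cosh u := by
  rw [← Real.cosh_abs, Real.cosh_eq]
  have h1 := Real.add_one_le_exp (|u| / 2)
  have h2 : (|u| / 2 + 1) * (|u| / 2 + 1) ≤ Real.exp (|u| / 2) * Real.exp (|u| / 2) :=
    mul_self_le_mul_self (by positivity) h1
  rw [← Real.exp_add] at h2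
  have h3 : |u| / 2 + |u| / 2 = |u| := by ring
  rw [h3] at h2
  have h4 := Real.exp_pos (-|u|)
  have h5 : |u| ^ 2 = u ^ 2 := sq_abs u
  nlinarith [abs_nonneg u]

lemma integrable_exp_quadratic {b : ℝ} (hb : 0 < b) (c : ℝ) :
    Integrable (fun u : ℝ => Real.exp (-b * u ^ 2 + c * u)) := by
  have h := (integrable_cexp_quadratic (b := (b : ℂ)) (by simpa using hb) (c : ℂ) 0).norm
  refine h.congr (Filter.Eventually.of_forall fun x => ?_)
  simp only [Complex.norm_exp]
  have hz : (-(b:ℂ) * (x:ℂ) ^ 2 + (c:ℂ) * (x:ℂ) + 0) = ((-b * x ^ 2 + c * x : ℝ) : ℂ) := by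
    push_cast; ring
  rw [hz, Complex.ofReal_re]

lemma integrable_exp_sub_cosh (ν x : ℝ) (hx : 0 < x) :
    Integrable (fun u : ℝ => Real.exp (ν * u - x * Real.cosh u)) := by
  refine (integrable_exp_quadratic (b := x / 8) (by positivity) ν).mono' ?_ ?_
  · exact (Real.continuous_exp.comp (by continuity)).aestronglyMeasurable
  · filter_upwards with u
    rw [Real.norm_eq_abs, Real.abs_exp]
    apply Real.exp_le_exp.mpr
    have h := mul_le_mul_of_nonneg_left (cosh_quad u) hx.le
    nlinarith

lemma integral_exp_sub_cosh (ν x : ℝ) (hx : 0 < x) :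
    ∫ u : ℝ, Real.exp (ν * u - x * Real.cosh u) = 2 * besselK ν x := by
  have hI := integrable_exp_sub_cosh ν x hx
  have hIneg : Integrable (fun u : ℝ => Real.exp (ν * -u - x * Real.cosh (-u))) := by
    simpa using hI.comp_neg
  rw [← intervalIntegral.integral_Iic_add_Ioi (b := (0:ℝ)) hI.integrableOn hI.integrableOn]
  have h1 : (∫ u in Set.Iic (0:ℝ), Real.exp (ν * u - x * Real.cosh u)) =
      ∫ u in Set.Ioi (0:ℝ), Real.exp (ν * -u - x * Real.cosh (-u)) := by
    rw [show Set.Iic (0:ℝ) = Set.Iic (-(0:ℝ)) by norm_num,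
      ← integral_comp_neg_Ioi]
  rw [h1, ← integral_add hIneg.integrableOn hI.integrableOn]
  unfold besselK
  rw [← integral_const_mul]
  refine setIntegral_congr_fun measurableSet_Ioi fun u _ => ?_
  rw [Real.cosh_neg, Real.cosh_eq (ν * u)]
  rw [show ν * -u - x * Real.cosh u = -x * Real.cosh u + -(ν * u) by ring,
    show ν * u - x * Real.cosh u = -x * Real.cosh u + ν * u by ring,
    Real.exp_add, Real.exp_add]
  ring

lemma range_const_mul_exp {c : ℝ} (hc : 0 < c) :
    (fun u : ℝ => c * Real.exp u) '' Set.univ = Set.Ioi (0:ℝ) := by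
  rw [Set.image_univ]
  ext t
  constructor
  · rintro ⟨u, rfl⟩
    exact mul_pos hc (Real.exp_pos u)
  · intro ht
    have ht' : (0:ℝ) < t := ht
    refine ⟨Real.log (t / c), ?_⟩
    show c * Real.exp (Real.log (t / c)) = t
    rw [Real.exp_log (by positivity)]
    field_simp

lemma integral_eq_besselK {ν a b : ℝ} (ha : 0 < a) (hb : 0 < b) :
    ∫ t in Set.Ioi (0:ℝ), t ^ (ν - 1) * Real.exp (-(a * t + b / t)) =
      2 * (b / a) ^ (ν / 2) * besselK ν (2 * Real.sqrt (a * b)) := by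
  set c : ℝ := Real.sqrt (b / a) with hc
  have hc0 : 0 < c := Real.sqrt_pos.mpr (by positivity)
  have hderiv : ∀ u ∈ (Set.univ : Set ℝ),
      HasDerivWithinAt (fun u : ℝ => c * Real.exp u) (c * Real.exp u) Set.univ u := fun u _ =>
    ((Real.hasDerivAt_exp u).const_mul c).hasDerivWithinAt
  have hinj : Set.InjOn (fun u : ℝ => c * Real.exp u) Set.univ := fun u _ v _ h => by
    exact Real.exp_injective (mul_left_cancel₀ hc0.ne' h)
  have him := range_const_mul_exp hc0
  have key := integral_image_eq_integral_abs_deriv_smul MeasurableSet.univ hderiv hinj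
    (fun t => t ^ (ν - 1) * Real.exp (-(a * t + b / t)))
  rw [him] at key
  rw [key, Measure.restrict_univ]
  have hab : 0 < Real.sqrt (a * b) := Real.sqrt_pos.mpr (by positivity)
  have hac : a * c = Real.sqrt (a * b) := by
    rw [hc, Real.sqrt_div hb.le, Real.sqrt_mul ha.le]
    rw [show a = Real.sqrt a * Real.sqrt a from (Real.mul_self_sqrt ha.le).symm]
    have h0 : Real.sqrt a ≠ 0 := by positivity
    field_simp
    rw [Real.sqrt_sq (Real.sqrt_nonneg a)]
  have hbc : b / c = Real.sqrt (a * b) := by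
    rw [hc, Real.sqrt_div hb.le, Real.sqrt_mul ha.le]
    rw [show b = Real.sqrt b * Real.sqrt b from (Real.mul_self_sqrt hb.le).symm]
    have h0 : Real.sqrt b ≠ 0 := by positivity
    have h1 : Real.sqrt a ≠ 0 := by positivity
    field_simp
    rw [Real.sqrt_sq (Real.sqrt_nonneg b)]
  have hptw : ∀ u : ℝ,
      |c * Real.exp u| • ((c * Real.exp u) ^ (ν - 1) *
        Real.exp (-(a * (c * Real.exp u) + b / (c * Real.exp u)))) =
      c ^ ν * Real.exp (ν * u - 2 * Real.sqrt (a * b) * Real.cosh u) := by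
    intro u
    have he : (0:ℝ) < Real.exp u := Real.exp_pos u
    rw [smul_eq_mul, abs_of_pos (mul_pos hc0 he)]
    rw [Real.mul_rpow hc0.le he.le, ← Real.exp_mul]
    have harg : a * (c * Real.exp u) + b / (c * Real.exp u)
        = 2 * Real.sqrt (a * b) * Real.cosh u := by
      rw [Real.cosh_eq]
      rw [div_mul_eq_div_div, hbc]
      rw [show a * (c * Real.exp u) = a * c * Real.exp u by ring, hac]
      rw [div_eq_mul_inv, ← Real.exp_neg]
      ring
    rw [harg]
    rw [show ν * u - 2 * Real.sqrt (a * b) * Real.cosh u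
        = u * (ν - 1) + u + -(2 * Real.sqrt (a * b) * Real.cosh u) by ring]
    rw [Real.exp_add, Real.exp_add]
    rw [show c ^ ν = c ^ (ν - 1) * c by
      rw [← Real.rpow_add_one hc0.ne' (ν - 1)]; norm_num]
    ring
  simp_rw [hptw]
  rw [integral_const_mul, integral_exp_sub_cosh ν _ (by positivity)]
  have hcpow : c ^ ν = (b / a) ^ (ν / 2) := by
    rw [hc, Real.sqrt_eq_rpow, ← Real.rpow_mul (by positivity : (0:ℝ) ≤ b / a)]
    rw [show (1:ℝ)/2 * ν = ν / 2 by ring]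
  rw [hcpow]; ring

lemma besselK_half {x : ℝ} (hx : 0 < x) :
    besselK (1/2) x = Real.sqrt (π / (2 * x)) * Real.exp (-x) := by
  have himg : (fun t : ℝ => Real.sinh (t / 2)) '' Set.Ioi 0 = Set.Ioi (0:ℝ) := by
    ext s
    simp only [Set.mem_image, Set.mem_Ioi]
    constructor
    · rintro ⟨t, ht, rfl⟩
      exact Real.sinh_pos_iff.mpr (by linarith)
    · intro hs
      refine ⟨2 * Real.arsinh s, ?_, ?_⟩
      · have := Real.arsinh_pos_iff.mpr hs
        linarith
      · show Real.sinh (2 * Real.arsinh s / 2) = s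
        rw [show 2 * Real.arsinh s / 2 = Real.arsinh s by ring]
        exact Real.sinh_arsinh s
  have hderiv : ∀ t ∈ Set.Ioi (0:ℝ), HasDerivWithinAt (fun t : ℝ => Real.sinh (t / 2))
      (Real.cosh (t / 2) * (1 / 2)) (Set.Ioi 0) t := by
    intro t _
    have h1 : HasDerivAt (fun t : ℝ => t / 2) (1 / 2) t := by
      simpa using (hasDerivAt_id t).div_const 2
    exact ((Real.hasDerivAt_sinh (t / 2)).comp t h1).hasDerivWithinAt
  have hinj : Set.InjOn (fun t : ℝ => Real.sinh (t / 2)) (Set.Ioi 0) := fun u _ v _ h => by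
    have := Real.sinh_injective h
    linarith
  have key := integral_image_eq_integral_abs_deriv_smul measurableSet_Ioi hderiv hinj
    (fun s => 2 * (Real.exp (-x) * Real.exp (-(2 * x) * s ^ 2)))
  rw [himg] at key
  unfold besselK
  have heq : ∀ t ∈ Set.Ioi (0:ℝ),
      Real.exp (-x * Real.cosh t) * Real.cosh (1 / 2 * t) =
      |Real.cosh (t / 2) * (1 / 2)| •
        (2 * (Real.exp (-x) * Real.exp (-(2 * x) * Real.sinh (t / 2) ^ 2))) := by
    intro t _
    rw [smul_eq_mul, abs_of_pos (by positivity)]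
    have hcosh : Real.cosh t = 1 + 2 * Real.sinh (t / 2) ^ 2 := by
      have h := Real.cosh_two_mul (t / 2)
      rw [show 2 * (t / 2) = t by ring] at h
      rw [h, Real.cosh_sq]
      ring
    rw [hcosh, show -x * (1 + 2 * Real.sinh (t / 2) ^ 2)
        = -x + -(2 * x) * Real.sinh (t / 2) ^ 2 by ring, Real.exp_add]
    rw [show (1:ℝ) / 2 * t = t / 2 by ring]
    ring
  rw [setIntegral_congr_fun measurableSet_Ioi heq, ← key, integral_const_mul,
    integral_const_mul, integral_gaussian_Ioi]
  ring

lemma yukawa_integral {r η : ℝ} (hr : 0 < r) (hη : 0 < η) :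
    Real.exp (-η * r) / r = (1 / Real.sqrt π) *
      ∫ t in Set.Ioi (0:ℝ), t ^ (-(1:ℝ)/2) * Real.exp (-(r ^ 2 * t + η ^ 2 / 4 / t)) := by
  have h := integral_eq_besselK (ν := 1/2) (a := r ^ 2) (b := η ^ 2 / 4)
    (by positivity) (by positivity)
  rw [show -(1:ℝ)/2 = (1:ℝ)/2 - 1 by norm_num, h]
  have hs : Real.sqrt (r ^ 2 * (η ^ 2 / 4)) = r * η / 2 := by
    rw [show r ^ 2 * (η ^ 2 / 4) = (r * η / 2) ^ 2 by ring]
    exact Real.sqrt_sq (by positivity)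
  rw [hs, show 2 * (r * η / 2) = r * η by ring, besselK_half (by positivity)]
  have hA : ((η ^ 2 / 4 / r ^ 2 : ℝ)) ^ ((1/2 : ℝ) / 2) = Real.sqrt (η / (2 * r)) := by
    rw [show (η ^ 2 / 4 / r ^ 2 : ℝ) = (η / (2 * r)) ^ 2 by ring]
    rw [← Real.rpow_natCast (η / (2 * r)) 2, ← Real.rpow_mul (by positivity)]
    rw [show ((2:ℕ):ℝ) * ((1/2 : ℝ) / 2) = 1/2 by norm_num]
    exact (Real.sqrt_eq_rpow _).symm
  rw [hA]
  have hmul : Real.sqrt (η / (2 * r)) * Real.sqrt (π / (2 * (r * η)))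
      = Real.sqrt π / (2 * r) := by
    rw [← Real.sqrt_mul (by positivity)]
    rw [show η / (2 * r) * (π / (2 * (r * η))) = π / (2 * r) ^ 2 by field_simp]
    rw [Real.sqrt_div pi_pos.le, Real.sqrt_sq (by positivity)]
  have hsc : (1:ℝ) / Real.sqrt π * (2 * Real.sqrt (η / (2 * r)) *
      Real.sqrt (π / (2 * (r * η)))) = 1 / r := by
    rw [mul_assoc, hmul]
    have hπ : Real.sqrt π ≠ 0 := by positivity
    field_simp
  have hre : (1:ℝ) / Real.sqrt π * (2 * Real.sqrt (η / (2 * r)) *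
      (Real.sqrt (π / (2 * (r * η))) * Real.exp (-(r * η)))) =
      (1 / Real.sqrt π * (2 * Real.sqrt (η / (2 * r)) *
      Real.sqrt (π / (2 * (r * η))))) * Real.exp (-(r * η)) := by ring
  rw [hre, hsc, show -η * r = -(r * η) by ring, one_div, inv_mul_eq_div]

lemma integrableOn_aux {s c b : ℝ} (hs : -1 < s) (hc : 0 < c) (hb : 0 ≤ b) :
    IntegrableOn (fun t : ℝ => t ^ s * Real.exp (-(c * t + b / t))) (Set.Ioi 0) := by
  have hg : IntegrableOn (fun t : ℝ => t ^ s * Real.exp (-c * t ^ (1:ℝ))) (Set.Ioi 0) :=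
    integrableOn_rpow_mul_exp_neg_mul_rpow hs zero_lt_one hc
  refine hg.mono' ?_ ?_
  · refine ContinuousOn.aestronglyMeasurable ?_ measurableSet_Ioi
    refine ContinuousOn.mul ?_ ?_
    · exact continuousOn_id.rpow_const fun t ht => Or.inl (ne_of_gt ht)
    · refine Real.continuous_exp.comp_continuousOn ?_
      refine ContinuousOn.neg (ContinuousOn.add (by fun_prop) ?_)
      exact continuousOn_const.div continuousOn_id fun t ht => ne_of_gt ht
  · filter_upwards [ae_restrict_mem measurableSet_Ioi] with t ht
    have ht0 : (0:ℝ) < t := ht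
    rw [Real.norm_eq_abs, abs_mul, abs_of_nonneg (Real.rpow_nonneg ht0.le s),
      Real.abs_exp, Real.rpow_one]
    have hble : -(c * t + b / t) ≤ -c * t := by
      have : 0 ≤ b / t := by positivity
      linarith
    exact mul_le_mul_of_nonneg_left (Real.exp_le_exp.mpr hble) (Real.rpow_nonneg ht0.le s)

lemma Gamma_le_sqrtpi_mul_factorial (n : ℕ) :
    Real.Gamma ((n:ℝ) + 1/2) ≤ Real.sqrt π * n.factorial := by
  induction n with
  | zero =>
    have : ((0:ℕ):ℝ) + 1/2 = 1/2 := by norm_num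
    rw [this, Real.Gamma_one_half_eq]
    simp
  | succ n ih =>
    have h0 : ((n:ℝ) + 1/2) ≠ 0 := by positivity
    have hcast : ((n+1:ℕ):ℝ) + 1/2 = ((n:ℝ) + 1/2) + 1 := by push_cast; ring
    rw [hcast, Real.Gamma_add_one h0]
    have hpos : 0 ≤ Real.Gamma ((n:ℝ) + 1/2) := (Real.Gamma_pos_of_pos (by positivity)).le
    calc ((n:ℝ) + 1/2) * Real.Gamma ((n:ℝ) + 1/2)
        ≤ ((n:ℝ) + 1) * (Real.sqrt π * n.factorial) := by
          apply mul_le_mul (by linarith) ih hpos (by positivity)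
      _ = Real.sqrt π * (n+1).factorial := by
          rw [Nat.factorial_succ]; push_cast; ring

lemma norm_integral_bound {C b : ℝ} (hC : 0 < C) (hb : 0 < b) (n : ℕ) :
    (∫ t in Set.Ioi (0:ℝ), t ^ ((n:ℝ) - 1/2) * Real.exp (-(C * t + b / t))) ≤
      Real.sqrt π * n.factorial * (1 / C) ^ ((n:ℝ) + 1/2) := by
  have hn : (-1:ℝ) < (n:ℝ) - 1/2 := by
    have : (0:ℝ) ≤ n := Nat.cast_nonneg n
    linarith
  have h1 : (∫ t in Set.Ioi (0:ℝ), t ^ ((n:ℝ) - 1/2) * Real.exp (-(C * t + b / t))) ≤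
      ∫ t in Set.Ioi (0:ℝ), t ^ ((n:ℝ) - 1/2) * Real.exp (-(C * t)) := by
    refine setIntegral_mono_on (integrableOn_aux hn hC hb.le) ?_ measurableSet_Ioi ?_
    · have h := integrableOn_rpow_mul_exp_neg_mul_rpow (p := 1) hn zero_lt_one hC
      refine h.congr_fun (fun t ht => ?_) measurableSet_Ioi
      simp only [Real.rpow_one]
      ring_nf
    · intro t ht
      have ht0 : (0:ℝ) < t := ht
      have hble : -(C * t + b / t) ≤ -(C * t) := by
        have : 0 ≤ b / t := by positivity
        linarith
      exact mul_le_mul_of_nonneg_left (Real.exp_le_exp.mpr hble) (Real.rpow_nonneg ht0.le _)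
  have h2 : (∫ t in Set.Ioi (0:ℝ), t ^ ((n:ℝ) - 1/2) * Real.exp (-(C * t)))
      = (1 / C) ^ ((n:ℝ) + 1/2) * Real.Gamma ((n:ℝ) + 1/2) := by
    have h := integral_rpow_mul_exp_neg_mul_Ioi (a := (n:ℝ) + 1/2) (r := C)
      (by positivity) hC
    rw [show (n:ℝ) + 1/2 - 1 = (n:ℝ) - 1/2 by ring] at h
    exact h
  calc (∫ t in Set.Ioi (0:ℝ), t ^ ((n:ℝ) - 1/2) * Real.exp (-(C * t + b / t)))
      ≤ (1 / C) ^ ((n:ℝ) + 1/2) * Real.Gamma ((n:ℝ) + 1/2) := h1.trans h2.le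
    _ ≤ (1 / C) ^ ((n:ℝ) + 1/2) * (Real.sqrt π * n.factorial) := by
        exact mul_le_mul_of_nonneg_left (Gamma_le_sqrtpi_mul_factorial n)
          (Real.rpow_nonneg (by positivity) _)
    _ = Real.sqrt π * n.factorial * (1 / C) ^ ((n:ℝ) + 1/2) := by ring

theorem stmt9 (v₁ v₂ : EuclideanSpace ℝ (Fin 3)) (η : ℝ)
    (h₁ : 0 < ‖v₁‖) (h₂ : 0 < ‖v₂‖) (hη : 0 < η)
    (hconv : 2 * |(inner ℝ v₁ v₂ : ℝ)| < ‖v₁‖ ^ 2 + ‖v₂‖ ^ 2) :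
    Real.exp (-η * ‖v₁ - v₂‖) / ‖v₁ - v₂‖ =
      ∑' n : ℕ, (1 / Real.sqrt π) *
        ((-1) ^ n * (-(inner ℝ v₁ v₂ : ℝ)) ^ n / n.factorial) * Real.sqrt 2 *
        (‖v₁‖ ^ 2 + ‖v₂‖ ^ 2) ^ ((-(n : ℝ) - 1 / 2) / 2) * η ^ ((n : ℝ) + 1 / 2) *
        besselK ((n : ℝ) + 1 / 2) (η * Real.sqrt (‖v₁‖ ^ 2 + ‖v₂‖ ^ 2)) := by
  set A : ℝ := (inner ℝ v₁ v₂ : ℝ) with hAdef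
  set C : ℝ := ‖v₁‖ ^ 2 + ‖v₂‖ ^ 2 with hCdef
  have hC : 0 < C := by rw [hCdef]; positivity
  have hAC : 2 * |A| < C := hconv
  have hr2 : ‖v₁ - v₂‖ ^ 2 = C - 2 * A := by
    rw [hCdef, hAdef, norm_sub_sq_real]
    ring
  have hr : 0 < ‖v₁ - v₂‖ := by
    have h1 : 0 < ‖v₁ - v₂‖ ^ 2 := by
      rw [hr2]
      have := le_abs_self A
      linarith
    nlinarith [norm_nonneg (v₁ - v₂)]
  set r : ℝ := ‖v₁ - v₂‖ with hrdef
  set b : ℝ := η ^ 2 / 4 with hbdef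
  have hb : 0 < b := by rw [hbdef]; positivity
  set F : ℕ → ℝ → ℝ := fun n t =>
    (2 * A) ^ n / n.factorial * (t ^ ((n:ℝ) - 1/2) * Real.exp (-(C * t + b / t))) with hFdef
  have hFint : ∀ n : ℕ, Integrable (F n) (volume.restrict (Set.Ioi 0)) := by
    intro n
    have hn : (-1:ℝ) < (n:ℝ) - 1/2 := by
      have : (0:ℝ) ≤ n := Nat.cast_nonneg n
      linarith
    exact (integrableOn_aux hn hC hb.le).const_mul _
  have hnormint : ∀ n : ℕ, (∫ t in Set.Ioi (0:ℝ), ‖F n t‖) ≤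
      (Real.sqrt π / Real.sqrt C) * (2 * |A| / C) ^ n := by
    intro n
    have heq : ∀ t ∈ Set.Ioi (0:ℝ), ‖F n t‖ =
        (2 * |A|) ^ n / n.factorial *
          (t ^ ((n:ℝ) - 1/2) * Real.exp (-(C * t + b / t))) := by
      intro t ht
      have ht0 : (0:ℝ) < t := ht
      simp only [hFdef]
      rw [Real.norm_eq_abs, abs_mul, abs_div, abs_pow, abs_mul, abs_two]
      rw [abs_of_nonneg (show (0:ℝ) ≤ (n.factorial : ℝ) from Nat.cast_nonneg _)]
      rw [abs_of_nonneg (show (0:ℝ) ≤ t ^ ((n:ℝ) - 1/2) * Real.exp (-(C * t + b / t)) from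
        mul_nonneg (Real.rpow_nonneg ht0.le _) (Real.exp_pos _).le)]
    rw [setIntegral_congr_fun measurableSet_Ioi heq, integral_const_mul]
    have hfact : (0:ℝ) < n.factorial := by positivity
    calc (2 * |A|) ^ n / n.factorial *
          ∫ t in Set.Ioi (0:ℝ), t ^ ((n:ℝ) - 1/2) * Real.exp (-(C * t + b / t))
        ≤ (2 * |A|) ^ n / n.factorial *
          (Real.sqrt π * n.factorial * (1 / C) ^ ((n:ℝ) + 1/2)) := by
          exact mul_le_mul_of_nonneg_left (norm_integral_bound hC hb n) (by positivity)
      _ = (Real.sqrt π / Real.sqrt C) * (2 * |A| / C) ^ n := by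
          have hsplit : (1 / C : ℝ) ^ ((n:ℝ) + 1/2)
              = (1 / C) ^ (n:ℕ) * (1 / Real.sqrt C) := by
            rw [show (n:ℝ) + 1/2 = ((n:ℕ):ℝ) + (1/2 : ℝ) by norm_num,
              Real.rpow_add (by positivity), Real.rpow_natCast]
            congr 1
            rw [← Real.sqrt_eq_rpow, Real.sqrt_div (by norm_num : (0:ℝ) ≤ 1),
              Real.sqrt_one]
          rw [hsplit]
          have hfne : (n.factorial : ℝ) ≠ 0 := ne_of_gt hfact
          have hCne : (C : ℝ) ≠ 0 := ne_of_gt hC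
          have hsC : Real.sqrt C ≠ 0 := by positivity
          field_simp
          ring
  have hsum : Summable (fun n : ℕ => ∫ t in Set.Ioi (0:ℝ), ‖F n t‖) := by
    refine Summable.of_nonneg_of_le (fun n => integral_nonneg fun t => norm_nonneg _)
      hnormint ?_
    exact (summable_geometric_of_lt_one (by positivity) ((div_lt_one hC).mpr hAC)).mul_left _
  have hswap := MeasureTheory.integral_tsum_of_summable_integral_norm hFint hsum
  have hstep1 := yukawa_integral hr hη
  rw [hstep1]
  have hptw : Set.EqOn (fun t : ℝ => t ^ (-(1:ℝ)/2) * Real.exp (-(r ^ 2 * t + η ^ 2 / 4 / t)))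
      (fun t => ∑' n, F n t) (Set.Ioi 0) := by
    intro t ht
    have ht0 : (0:ℝ) < t := ht
    simp only [hFdef]
    have hexp : Real.exp (2 * A * t) = ∑' n : ℕ, (2 * A * t) ^ n / n.factorial := by
      rw [Real.exp_eq_exp_ℝ, NormedSpace.exp_eq_tsum_div]
    have hsplit2 : Real.exp (-(r ^ 2 * t + η ^ 2 / 4 / t))
        = Real.exp (2 * A * t) * Real.exp (-(C * t + b / t)) := by
      rw [← Real.exp_add]
      congr 1
      rw [hr2, hbdef]
      ring
    show t ^ (-(1:ℝ)/2) * Real.exp (-(r ^ 2 * t + η ^ 2 / 4 / t)) = _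
    rw [hsplit2, hexp, ← tsum_mul_right, ← tsum_mul_left]
    refine tsum_congr fun n => ?_
    have hpow : t ^ ((n:ℝ) - 1/2) = t ^ (n:ℕ) * t ^ (-(1:ℝ)/2) := by
      rw [← Real.rpow_natCast t n, ← Real.rpow_add ht0]
      congr 1
      push_cast
      ring
    rw [hpow, mul_pow]
    ring
  rw [setIntegral_congr_fun measurableSet_Ioi hptw, ← hswap, ← tsum_mul_left]
  refine tsum_congr fun n => ?_
  simp only [hFdef]
  rw [integral_const_mul]
  rw [show (n:ℝ) - 1/2 = ((n:ℝ) + 1/2) - 1 by ring]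
  rw [integral_eq_besselK (ν := (n:ℝ) + 1/2) hC hb]
  have hsq : 2 * Real.sqrt (C * b) = η * Real.sqrt C := by
    have h : C * b = (Real.sqrt C * η / 2) ^ 2 := by
      rw [hbdef]
      linear_combination (-(η ^ 2 / 4)) * Real.sq_sqrt hC.le
    rw [h, Real.sqrt_sq (by positivity)]
    ring
  rw [hsq]
  have hbC : (b / C : ℝ) ^ (((n:ℝ) + 1/2) / 2)
      = η ^ ((n:ℝ) + 1/2) * (2:ℝ) ^ (-((n:ℝ) + 1/2)) * C ^ ((-(n:ℝ) - 1/2) / 2) := by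
    rw [Real.div_rpow hb.le hC.le]
    have h1 : b ^ (((n:ℝ) + 1/2) / 2) = η ^ ((n:ℝ) + 1/2) * (2:ℝ) ^ (-((n:ℝ) + 1/2)) := by
      rw [hbdef, show η ^ 2 / 4 = (η / 2) ^ 2 by ring,
        ← Real.rpow_natCast (η / 2) 2, ← Real.rpow_mul (by positivity)]
      rw [show ((2:ℕ):ℝ) * (((n:ℝ) + 1/2) / 2) = (n:ℝ) + 1/2 by push_cast; ring]
      rw [Real.div_rpow hη.le (by norm_num : (0:ℝ) ≤ 2)]
      rw [div_eq_mul_inv, ← Real.rpow_neg (by norm_num : (0:ℝ) ≤ 2)]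
    have h2 : (C ^ (((n:ℝ) + 1/2) / 2))⁻¹ = C ^ ((-(n:ℝ) - 1/2) / 2) := by
      rw [← Real.rpow_neg hC.le, show -(((n:ℝ) + 1/2) / 2) = (-(n:ℝ) - 1/2) / 2 by ring]
    rw [div_eq_mul_inv, h1, h2]
  rw [hbC]
  have h2pow : ((2:ℝ) * A) ^ n = 2 ^ n * A ^ n := mul_pow 2 A n
  have hneg : ((-1:ℝ)) ^ n * (-A) ^ n = A ^ n := by
    rw [← mul_pow]
    norm_num
  have htwo : (2:ℝ) ^ n * 2 * (2:ℝ) ^ (-((n:ℝ) + 1/2)) = Real.sqrt 2 := by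
    rw [Real.sqrt_eq_rpow, ← Real.rpow_natCast (2:ℝ) n]
    rw [show ((2:ℝ)) ^ ((n:ℕ):ℝ) * 2 * (2:ℝ) ^ (-((n:ℝ) + 1/2))
        = (2:ℝ) ^ ((n:ℕ):ℝ) * (2:ℝ) ^ (-((n:ℝ) + 1/2)) * 2 by ring]
    rw [← Real.rpow_add (by norm_num : (0:ℝ) < 2)]
    rw [show ((n:ℕ):ℝ) + -((n:ℝ) + 1/2) = -(1/2) by push_cast; ring]
    have hfin : (2:ℝ) ^ ((1:ℝ)/2) = (2:ℝ) ^ ((-(1/2) + 1 : ℝ)) := by norm_num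
    rw [hfin, Real.rpow_add (by norm_num : (0:ℝ) < 2), Real.rpow_one]
  rw [h2pow, ← hneg, ← htwo]
  ring
end

section
/- For real constants B, C, x₂ > 0 with Bk² < C, differentiating the Theorem 1 series in x₂ yields: exp(-x₂√(Bk²+C)) = Σ_{n=0}^∞ √(2/π) · ((-1)ⁿ Bⁿ k^{2n}/n!) · 2^{-n} · x₂^{n+1/2} · C^{1/4 − n/2} · K_{n−1/2}(x₂√C). -/
open MeasureTheory Real

open Set
lemma real_exp_hasSum (x : ℝ) : HasSum (fun n : ℕ => x ^ n / n.factorial) (Real.exp x) := by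
  rw [Real.exp_eq_exp_ℝ]
  exact NormedSpace.expSeries_div_hasSum_exp x

lemma integrable_aux {p q : ℝ} (c : ℝ) (hp : 0 < p) (hq : 0 < q) :
    Integrable (fun t : ℝ => Real.exp (-p * Real.exp t - q * Real.exp (-t) + c * t)) := by
  set m := min p q with hm
  have hm0 : 0 < m := lt_min hp hq
  have key : ∀ t : ℝ, -p * Real.exp t - q * Real.exp (-t) + c * t
      ≤ 2 * c ^ 2 / m + -(m / 8) * t ^ 2 := by
    intro t
    have h1 : m * Real.exp |t| ≤ p * Real.exp t + q * Real.exp (-t) := by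
      rcases abs_cases t with ⟨h, _⟩ | ⟨h, _⟩ <;> rw [h] <;>
        nlinarith [Real.exp_pos t, Real.exp_pos (-t), min_le_left p q, min_le_right p q]
    have h3 : 1 + |t| / 2 ≤ Real.exp (|t| / 2) := by
      have := Real.add_one_le_exp (|t| / 2); linarith
    have h4 : Real.exp (|t| / 2) * Real.exp (|t| / 2) = Real.exp |t| := by
      rw [← Real.exp_add]; ring_nf
    have h2 : t ^ 2 / 4 ≤ Real.exp |t| := by
      nlinarith [abs_nonneg t, sq_abs t]
    have h5 : 0 ≤ (m * t - 4 * c) ^ 2 / (8 * m) := by positivity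
    have h6 : (m * t - 4 * c) ^ 2 / (8 * m) = m / 8 * t ^ 2 - c * t + 2 * c ^ 2 / m := by
      field_simp; ring
    have h7 : m * (t ^ 2 / 4) ≤ m * Real.exp |t| :=
      mul_le_mul_of_nonneg_left h2 hm0.le
    nlinarith [h1, h7]
  refine Integrable.mono'
    ((integrable_exp_neg_mul_sq (show (0:ℝ) < m / 8 by positivity)).const_mul
      (Real.exp (2 * c ^ 2 / m))) ?_ ?_
  · exact (Continuous.rexp (by continuity)).aestronglyMeasurable
  · filter_upwards with t
    rw [Real.norm_eq_abs, abs_of_pos (Real.exp_pos _), ← Real.exp_add]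
    exact Real.exp_le_exp.2 (key t)

set_option maxHeartbeats 2000000 in
lemma key_integral {p q : ℝ} (hp : 0 < p) (hq : 0 < q) :
    ∫ t : ℝ, Real.exp (-p * Real.exp t - q * Real.exp (-t) - t / 2)
      = Real.sqrt (π / q) * Real.exp (-2 * Real.sqrt (p * q)) := by
  set c := Real.sqrt (p / q) with hc
  have hc0 : 0 < c := Real.sqrt_pos.2 (by positivity)
  have hcq : q * c ^ 2 = p := by
    rw [hc, Real.sq_sqrt (by positivity : (0:ℝ) ≤ p / q)]
    field_simp
  have hqc : q * c = Real.sqrt (p * q) := by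
    have h1 : (q * c) ^ 2 = p * q := by nlinarith [hcq]
    rw [← h1, Real.sqrt_sq (by positivity)]
  have hpt : ∀ u : ℝ, u ≠ 0 →
      -q * u ^ 2 - p / u ^ 2 = -q * (u - c / u) ^ 2 - 2 * Real.sqrt (p * q) := by
    intro u hu
    rw [← hqc, ← hcq]
    field_simp
    ring
  -- Step A : substitution u = exp (-(t/2))
  have himA : (fun t : ℝ => Real.exp (-(t / 2))) '' Set.univ = Set.Ioi 0 := by
    rw [Set.image_univ]
    ext u
    simp only [Set.mem_range, Set.mem_Ioi]
    constructor
    · rintro ⟨t, rfl⟩; exact Real.exp_pos _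
    · intro hu
      exact ⟨-2 * Real.log u, by
        rw [show -(-2 * Real.log u / 2) = Real.log u by ring, Real.exp_log hu]⟩
  have hfA : ∀ t ∈ (Set.univ : Set ℝ), HasDerivWithinAt (fun t : ℝ => Real.exp (-(t / 2)))
      (Real.exp (-(t / 2)) * -(1 / 2)) Set.univ t := by
    intro t _
    exact (((hasDerivAt_id t).div_const 2).neg.exp).hasDerivWithinAt
  have hinjA : Set.InjOn (fun t : ℝ => Real.exp (-(t / 2))) Set.univ := by
    intro a _ b _ h
    simp only at h
    have := Real.exp_injective h
    linarith
  have hA := integral_image_eq_integral_abs_deriv_smul MeasurableSet.univ hfA hinjA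
    (fun u => 2 * Real.exp (-q * u ^ 2 - p / u ^ 2))
  rw [himA, Measure.restrict_univ] at hA
  have hA' : (∫ t : ℝ, |Real.exp (-(t / 2)) * -(1 / 2)| •
        (2 * Real.exp (-q * Real.exp (-(t / 2)) ^ 2 - p / Real.exp (-(t / 2)) ^ 2)))
      = ∫ t : ℝ, Real.exp (-p * Real.exp t - q * Real.exp (-t) - t / 2) := by
    congr 1
    funext t
    have habs : |Real.exp (-(t / 2)) * -(1 / 2)| = Real.exp (-(t / 2)) * (1 / 2) := by
      rw [abs_mul, abs_of_pos (Real.exp_pos _)]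
      norm_num
    have he : Real.exp (-(t / 2)) ^ 2 = Real.exp (-t) := by
      rw [sq, ← Real.exp_add]; ring_nf
    have he2 : p / Real.exp (-t) = p * Real.exp t := by
      rw [Real.exp_neg]
      field_simp
    rw [smul_eq_mul, habs, he, he2]
    calc Real.exp (-(t / 2)) * (1 / 2) * (2 * Real.exp (-q * Real.exp (-t) - p * Real.exp t))
        = Real.exp (-(t / 2)) * Real.exp (-q * Real.exp (-t) - p * Real.exp t) := by ring
      _ = Real.exp (-(t / 2) + (-q * Real.exp (-t) - p * Real.exp t)) := (Real.exp_add _ _).symm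
      _ = Real.exp (-p * Real.exp t - q * Real.exp (-t) - t / 2) := by congr 1; ring
  rw [hA'] at hA
  -- now hA : ∫ u in Ioi 0, 2 * exp (-q u² - p/u²) = J
  -- Step C : ∫ g = ∫ (c/u²) g
  have himC : (fun u : ℝ => c / u) '' Set.Ioi 0 = Set.Ioi 0 := by
    ext v
    simp only [Set.mem_image, Set.mem_Ioi]
    constructor
    · rintro ⟨u, hu, rfl⟩; positivity
    · intro hv; exact ⟨c / v, by positivity, by field_simp⟩
  have hderivC : ∀ u : ℝ, 0 < u → HasDerivAt (fun u : ℝ => c / u) (-c / u ^ 2) u := by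
    intro u hu
    have h : HasDerivAt (fun u : ℝ => c * u⁻¹) (c * -((u : ℝ) ^ 2)⁻¹) u :=
      (hasDerivAt_inv hu.ne').const_mul c
    have h2 : HasDerivAt (fun u : ℝ => c / u) (c * -((u : ℝ) ^ 2)⁻¹) u := by
      simpa [div_eq_mul_inv] using h
    have h3 : c * -((u : ℝ) ^ 2)⁻¹ = -c / u ^ 2 := by field_simp
    exact h3 ▸ h2
  have hfC : ∀ u ∈ Set.Ioi (0:ℝ), HasDerivWithinAt (fun u : ℝ => c / u) (-c / u ^ 2)
      (Set.Ioi 0) u := fun u hu => (hderivC u hu).hasDerivWithinAt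
  have hinjC : Set.InjOn (fun u : ℝ => c / u) (Set.Ioi 0) := by
    intro a ha b hb h
    simp only at h
    have ha' : (0:ℝ) < a := ha
    have hb' : (0:ℝ) < b := hb
    field_simp at h
    exact h.symm
  have hC := integral_image_eq_integral_abs_deriv_smul measurableSet_Ioi hfC hinjC
    (fun u => Real.exp (-q * (u - c / u) ^ 2))
  rw [himC] at hC
  have hC' : ∫ u in Set.Ioi (0:ℝ), |(-c / u ^ 2)| • Real.exp (-q * (c / u - c / (c / u)) ^ 2)
      = ∫ u in Set.Ioi (0:ℝ), (c / u ^ 2) * Real.exp (-q * (u - c / u) ^ 2) := by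
    apply setIntegral_congr_fun measurableSet_Ioi
    intro u hu
    dsimp only
    have hu' : (0:ℝ) < u := hu
    have h1 : |(-c / u ^ 2)| = c / u ^ 2 := by
      rw [show -c / u ^ 2 = -(c / u ^ 2) by ring, abs_neg, abs_of_pos (by positivity)]
    have h2 : c / (c / u) = u := by field_simp
    rw [smul_eq_mul, h1, h2]
    congr 2
    ring
  rw [hC'] at hC
  -- Step D : Gaussian
  have himD : (fun u : ℝ => u - c / u) '' Set.Ioi 0 = Set.univ := by
    ext w
    simp only [Set.mem_image, Set.mem_Ioi, Set.mem_univ, iff_true]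
    refine ⟨(w + Real.sqrt (w ^ 2 + 4 * c)) / 2, ?_, ?_⟩
    · have h1 : |w| < Real.sqrt (w ^ 2 + 4 * c) := by
        rw [← Real.sqrt_sq_eq_abs]
        exact Real.sqrt_lt_sqrt (sq_nonneg w) (by linarith)
      have := neg_abs_le w
      linarith
    · have h1 : |w| < Real.sqrt (w ^ 2 + 4 * c) := by
        rw [← Real.sqrt_sq_eq_abs]
        exact Real.sqrt_lt_sqrt (sq_nonneg w) (by linarith)
      have hu0 : (0:ℝ) < (w + Real.sqrt (w ^ 2 + 4 * c)) / 2 := by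
        have := neg_abs_le w; linarith
      have hs : Real.sqrt (w ^ 2 + 4 * c) ^ 2 = w ^ 2 + 4 * c :=
        Real.sq_sqrt (by positivity)
      have hne : (0:ℝ) < w + Real.sqrt (w ^ 2 + 4 * c) := by linarith
      field_simp [hne.ne']
      nlinarith [hs]
  have hfD : ∀ u ∈ Set.Ioi (0:ℝ), HasDerivWithinAt (fun u : ℝ => u - c / u) (1 + c / u ^ 2)
      (Set.Ioi 0) u := by
    intro u hu
    have h := (hasDerivAt_id u).sub (hderivC u hu)
    have h2 : (1 : ℝ) - -c / u ^ 2 = 1 + c / u ^ 2 := by ring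
    exact (h2 ▸ h).hasDerivWithinAt
  have hinjD : Set.InjOn (fun u : ℝ => u - c / u) (Set.Ioi 0) := by
    intro a ha b hb h
    simp only at h
    have ha' : (0:ℝ) < a := ha
    have hb' : (0:ℝ) < b := hb
    have key : (a - b) * (a * b + c) = 0 := by
      field_simp at h
      nlinarith [h]
    rcases mul_eq_zero.1 key with h1 | h2
    · linarith [sub_eq_zero.1 h1]
    · nlinarith [mul_pos ha' hb']
  have hD := integral_image_eq_integral_abs_deriv_smul measurableSet_Ioi hfD hinjD
    (fun w => Real.exp (-q * w ^ 2))
  rw [himD, Measure.restrict_univ, integral_gaussian] at hD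
  have hD' : ∫ u in Set.Ioi (0:ℝ), |1 + c / u ^ 2| • Real.exp (-q * (u - c / u) ^ 2)
      = ∫ u in Set.Ioi (0:ℝ), (1 + c / u ^ 2) * Real.exp (-q * (u - c / u) ^ 2) := by
    apply setIntegral_congr_fun measurableSet_Ioi
    intro u hu
    dsimp only
    have hu' : (0:ℝ) < u := hu
    rw [smul_eq_mul, abs_of_pos (by positivity)]
  rw [hD'] at hD
  -- Integrability
  have hxb : ∀ x : ℝ, 0 ≤ x → x * Real.exp (-(p * x)) ≤ 1 / p := by
    intro x hx
    have h1 : p * x + 1 ≤ Real.exp (p * x) := Real.add_one_le_exp _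
    calc x * Real.exp (-(p * x)) = x * p * Real.exp (-(p * x)) / p := by
          field_simp
      _ ≤ Real.exp (p * x) * Real.exp (-(p * x)) / p := by
          gcongr
          all_goals first | positivity | linarith
      _ = 1 / p := by rw [← Real.exp_add]; simp
  have hg_int : IntegrableOn (fun u => Real.exp (-q * (u - c / u) ^ 2)) (Set.Ioi 0) := by
    refine Integrable.mono'
      (((integrable_exp_neg_mul_sq hq).const_mul (Real.exp (2 * Real.sqrt (p * q)))).integrableOn)
      ?_ ?_
    · refine (ContinuousOn.rexp ?_).aestronglyMeasurable measurableSet_Ioi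
      apply ContinuousOn.mul continuousOn_const
      exact (continuousOn_id.sub (continuousOn_const.div continuousOn_id
        fun u hu => ne_of_gt hu)).pow 2
    · rw [ae_restrict_iff' measurableSet_Ioi]
      filter_upwards with u hu
      have hu' : (0:ℝ) < u := hu
      rw [Real.norm_eq_abs, abs_of_pos (Real.exp_pos _)]
      have heq : -q * (u - c / u) ^ 2 = -q * u ^ 2 - p / u ^ 2 + 2 * Real.sqrt (p * q) := by
        have := hpt u hu'.ne'; linarith
      rw [heq, Real.exp_add, mul_comm]
      have hppos : (0:ℝ) ≤ p / u ^ 2 := by positivity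
      gcongr
      all_goals first | positivity | linarith
  have hg2_int : IntegrableOn (fun u => (c / u ^ 2) * Real.exp (-q * (u - c / u) ^ 2))
      (Set.Ioi 0) := by
    refine Integrable.mono'
      (((integrable_exp_neg_mul_sq hq).const_mul
        (Real.exp (2 * Real.sqrt (p * q)) * (c / p))).integrableOn) ?_ ?_
    · refine ContinuousOn.aestronglyMeasurable ?_ measurableSet_Ioi
      apply ContinuousOn.mul
      · exact continuousOn_const.div (continuousOn_id.pow 2)
          fun u hu => pow_ne_zero 2 (ne_of_gt hu)
      · refine (ContinuousOn.rexp ?_)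
        apply ContinuousOn.mul continuousOn_const
        exact (continuousOn_id.sub (continuousOn_const.div continuousOn_id
          fun u hu => ne_of_gt hu)).pow 2
    · rw [ae_restrict_iff' measurableSet_Ioi]
      filter_upwards with u hu
      have hu' : (0:ℝ) < u := hu
      rw [Real.norm_eq_abs, abs_of_pos (by positivity)]
      have heq : -q * (u - c / u) ^ 2 = -q * u ^ 2 - p / u ^ 2 + 2 * Real.sqrt (p * q) := by
        have := hpt u hu'.ne'; linarith
      rw [heq]
      have hb1 : (c / u ^ 2) * Real.exp (-(p / u ^ 2)) ≤ c / p := by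
        have h0 : (0:ℝ) ≤ 1 / u ^ 2 := by positivity
        have := hxb (1 / u ^ 2) h0
        have heq2 : -(p * (1 / u ^ 2)) = -(p / u ^ 2) := by ring
        rw [heq2] at this
        calc (c / u ^ 2) * Real.exp (-(p / u ^ 2))
            = c * ((1 / u ^ 2) * Real.exp (-(p / u ^ 2))) := by ring
          _ ≤ c * (1 / p) := by gcongr
          _ = c / p := by ring
      calc (c / u ^ 2) * Real.exp (-q * u ^ 2 - p / u ^ 2 + 2 * Real.sqrt (p * q))
          = ((c / u ^ 2) * Real.exp (-(p / u ^ 2))) *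
            (Real.exp (2 * Real.sqrt (p * q)) * Real.exp (-q * u ^ 2)) := by
            rw [show -q * u ^ 2 - p / u ^ 2 + 2 * Real.sqrt (p * q)
                = -(p / u ^ 2) + (2 * Real.sqrt (p * q) + -q * u ^ 2) by ring,
              Real.exp_add, Real.exp_add]
            ring
        _ ≤ (c / p) * (Real.exp (2 * Real.sqrt (p * q)) * Real.exp (-q * u ^ 2)) := by
            exact mul_le_mul_of_nonneg_right hb1 (by positivity)
        _ = Real.exp (2 * Real.sqrt (p * q)) * (c / p) * Real.exp (-q * u ^ 2) := by ring
  -- combine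
  have hsplit : ∫ u in Set.Ioi (0:ℝ), (1 + c / u ^ 2) * Real.exp (-q * (u - c / u) ^ 2)
      = (∫ u in Set.Ioi (0:ℝ), Real.exp (-q * (u - c / u) ^ 2))
        + ∫ u in Set.Ioi (0:ℝ), (c / u ^ 2) * Real.exp (-q * (u - c / u) ^ 2) := by
    rw [← integral_add hg_int hg2_int]
    congr 1
    funext u
    ring
  have hgval : (∫ u in Set.Ioi (0:ℝ), Real.exp (-q * (u - c / u) ^ 2))
      = Real.sqrt (π / q) / 2 := by
    rw [hsplit, ← hC] at hD
    linarith
  have hMval : (∫ u in Set.Ioi (0:ℝ), Real.exp (-q * u ^ 2 - p / u ^ 2))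
      = Real.exp (-2 * Real.sqrt (p * q)) * (Real.sqrt (π / q) / 2) := by
    rw [← hgval, ← integral_const_mul]
    apply setIntegral_congr_fun measurableSet_Ioi
    intro u hu
    dsimp only
    have hu' : (0:ℝ) < u := hu
    rw [← Real.exp_add]
    congr 1
    have := hpt u hu'.ne'
    linarith
  rw [← hA, integral_const_mul, hMval]
  ring

lemma integrable_cosh_aux {z : ℝ} (ν : ℝ) (hz : 0 < z) :
    Integrable (fun t : ℝ => Real.exp (-z * Real.cosh t + ν * t)) := by
  apply (integrable_aux ν (half_pos hz) (half_pos hz)).congr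
  filter_upwards with t
  rw [Real.cosh_eq]
  ring_nf

lemma integral_cosh_eq (ν : ℝ) {z : ℝ} (hz : 0 < z) :
    ∫ t : ℝ, Real.exp (-z * Real.cosh t + ν * t) = 2 * besselK ν z := by
  have hint := integrable_cosh_aux ν hz
  have hint2 := integrable_cosh_aux (-ν) hz
  rw [← intervalIntegral.integral_Iic_add_Ioi (hint.integrableOn) (hint.integrableOn)]
  have h1 : ∫ t in Set.Iic (0:ℝ), Real.exp (-z * Real.cosh t + ν * t)
      = ∫ t in Set.Ioi (0:ℝ), Real.exp (-z * Real.cosh t + -ν * t) := by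
    have h := integral_comp_neg_Ioi (0:ℝ)
      (fun t => Real.exp (-z * Real.cosh t + ν * t))
    simp only [neg_zero] at h
    rw [← h]
    apply setIntegral_congr_fun measurableSet_Ioi
    intro t ht
    dsimp only
    rw [Real.cosh_neg]
    ring_nf
  rw [h1, ← integral_add (hint2.integrableOn) (hint.integrableOn)]
  rw [show (2 : ℝ) * besselK ν z
      = ∫ t in Set.Ioi (0:ℝ), 2 * (Real.exp (-z * Real.cosh t) * Real.cosh (ν * t)) by
    rw [integral_const_mul, besselK]]
  apply setIntegral_congr_fun measurableSet_Ioi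
  intro t ht
  dsimp only
  rw [Real.cosh_eq (ν * t), show -z * Real.cosh t + -ν * t = -z * Real.cosh t + -(ν * t) by ring,
    show -z * Real.cosh t + ν * t = -z * Real.cosh t + ν * t from rfl,
    Real.exp_add, Real.exp_add]
  ring

set_option maxHeartbeats 2000000 in
theorem stmt16 (B C x₂ k : ℝ) (hB : 0 < B) (hC : 0 < C) (hx : 0 < x₂)
    (hconv : B * k ^ 2 < C) :
    Real.exp (-x₂ * Real.sqrt (B * k ^ 2 + C)) =
      ∑' n : ℕ, Real.sqrt (2 / π) * ((-1) ^ n * B ^ n * k ^ (2 * n) / n.factorial) *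
        (2 : ℝ) ^ (-(n : ℝ)) * x₂ ^ ((n : ℝ) + 1 / 2) * C ^ ((1 : ℝ) / 4 - (n : ℝ) / 2) *
        besselK ((n : ℝ) - 1 / 2) (x₂ * Real.sqrt C) := by
  have hsC : 0 < Real.sqrt C := Real.sqrt_pos.2 hC
  have hCC : Real.sqrt C * Real.sqrt C = C := Real.mul_self_sqrt hC.le
  set z : ℝ := x₂ * Real.sqrt C with hzdef
  have hz : 0 < z := by positivity
  set q : ℝ := z / 2 with hqdef
  have hq : 0 < q := by positivity
  set a : ℝ := -(B * k ^ 2 * x₂) / (2 * Real.sqrt C) with hadef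
  have ha_nonpos : a ≤ 0 := by
    rw [hadef]
    apply div_nonpos_of_nonpos_of_nonneg
    · have : 0 ≤ B * k ^ 2 * x₂ := by positivity
      linarith
    · positivity
  have hqval : q = x₂ * Real.sqrt C / 2 := by rw [hqdef, hzdef]
  have habs : |a| < q := by
    rw [abs_lt]
    constructor
    · rw [hadef, hqval, neg_lt, neg_div, neg_neg]
      rw [div_lt_div_iff₀ (by positivity : (0:ℝ) < 2 * Real.sqrt C) (by norm_num : (0:ℝ) < 2)]
      nlinarith [hconv, hx, hsC]
    · linarith [hq]
  have hpa : 0 < q - a := by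
    have : 0 ≤ |a| := abs_nonneg a
    have : a ≤ |a| := le_abs_self a
    linarith
  -- the series of functions
  set F : ℕ → ℝ → ℝ := fun n t =>
    (a * Real.exp t) ^ n / n.factorial * Real.exp (-z * Real.cosh t - t / 2) with hFdef
  have hFcont : ∀ n : ℕ, Continuous (F n) := by
    intro n
    apply Continuous.mul
    · exact ((continuous_const.mul Real.continuous_exp).pow n).div_const _
    · exact Real.continuous_exp.comp
        ((continuous_const.mul Real.continuous_cosh).sub (continuous_id.div_const 2))
  have hFsum : ∀ t : ℝ, HasSum (fun n => F n t)
      (Real.exp (-(q - a) * Real.exp t - q * Real.exp (-t) - t / 2)) := by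
    intro t
    have h := (real_exp_hasSum (a * Real.exp t)).mul_right
      (Real.exp (-z * Real.cosh t - t / 2))
    have heq : Real.exp (a * Real.exp t) * Real.exp (-z * Real.cosh t - t / 2)
        = Real.exp (-(q - a) * Real.exp t - q * Real.exp (-t) - t / 2) := by
      rw [← Real.exp_add, Real.cosh_eq]
      congr 1
      rw [hqdef]
      ring
    exact heq ▸ h
  have hmeas : ∀ n : ℕ, AEStronglyMeasurable (F n) volume :=
    fun n => (hFcont n).aestronglyMeasurable
  have hD_int : Integrable (fun t : ℝ =>
      Real.exp (-(q - |a|) * Real.exp t - q * Real.exp (-t) - t / 2)) := by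
    apply (integrable_aux (-(1/2)) (sub_pos.2 habs) hq).congr
    filter_upwards with t
    congr 1
    ring
  have htsum_norm : ∀ t : ℝ, (∑' n : ℕ, (‖F n t‖₊ : ENNReal))
      = ENNReal.ofReal (Real.exp (-(q - |a|) * Real.exp t - q * Real.exp (-t) - t / 2)) := by
    intro t
    have hsummable_t : Summable (fun n : ℕ =>
        (|a| * Real.exp t) ^ n / (n.factorial : ℝ) * Real.exp (-z * Real.cosh t - t / 2)) :=
      ((real_exp_hasSum _).summable).mul_right _
    have h1 : ∀ n : ℕ, ((‖F n t‖₊ : ENNReal)) = ENNReal.ofReal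
        ((|a| * Real.exp t) ^ n / n.factorial * Real.exp (-z * Real.cosh t - t / 2)) := by
      intro n
      rw [show ((‖F n t‖₊ : ENNReal)) = ‖F n t‖ₑ from rfl, Real.enorm_eq_ofReal_abs]
      congr 1
      rw [hFdef]
      dsimp only
      rw [abs_mul, abs_div, abs_pow, abs_mul, abs_of_pos (Real.exp_pos _),
        abs_of_pos (Real.exp_pos _), Nat.abs_cast]
    rw [tsum_congr h1, ← ENNReal.ofReal_tsum_of_nonneg (fun n => by positivity) hsummable_t]
    congr 1
    rw [((real_exp_hasSum (|a| * Real.exp t)).mul_right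
      (Real.exp (-z * Real.cosh t - t / 2))).tsum_eq]
    rw [← Real.exp_add, Real.cosh_eq]
    congr 1
    rw [hqdef]
    ring
  have hfin : (∑' n : ℕ, ∫⁻ t : ℝ, (‖F n t‖₊ : ENNReal)) ≠ ⊤ := by
    change (∑' n : ℕ, ∫⁻ t : ℝ, ‖F n t‖ₑ) ≠ ⊤
    rw [← MeasureTheory.lintegral_tsum (fun n => (hmeas n).enorm)]
    change (∫⁻ t : ℝ, ∑' n : ℕ, (‖F n t‖₊ : ENNReal)) ≠ ⊤
    have heq : (∫⁻ t : ℝ, ∑' n : ℕ, (‖F n t‖₊ : ENNReal))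
        = ∫⁻ t : ℝ, (‖Real.exp (-(q - |a|) * Real.exp t - q * Real.exp (-t) - t / 2)‖₊ : ENNReal) := by
      apply lintegral_congr
      intro t
      rw [htsum_norm t, show ((‖Real.exp (-(q - |a|) * Real.exp t - q * Real.exp (-t) - t / 2)‖₊ : ENNReal)) = ‖Real.exp (-(q - |a|) * Real.exp t - q * Real.exp (-t) - t / 2)‖ₑ from rfl, Real.enorm_eq_ofReal (Real.exp_pos _).le]
    rw [heq]
    exact hD_int.hasFiniteIntegral.ne
  have hinterchange : (∑' n : ℕ, ∫ t : ℝ, F n t)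
      = Real.sqrt (π / q) * Real.exp (-2 * Real.sqrt ((q - a) * q)) := by
    rw [← MeasureTheory.integral_tsum hmeas hfin, ← key_integral hpa hq]
    congr 1
    funext t
    exact (hFsum t).tsum_eq
  have hFn_int : ∀ n : ℕ, ∫ t : ℝ, F n t
      = a ^ n / n.factorial * (2 * besselK ((n:ℝ) - 1/2) z) := by
    intro n
    rw [← integral_cosh_eq ((n:ℝ) - 1/2) hz, ← integral_const_mul]
    congr 1
    funext t
    rw [hFdef]
    dsimp only
    rw [mul_pow, ← Real.exp_nat_mul,
      show -z * Real.cosh t + ((n:ℝ) - 1/2) * t = (n:ℝ) * t + (-z * Real.cosh t - t / 2) by ring,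
      Real.exp_add]
    ring
  -- rewrite the statement's terms
  set K : ℝ := Real.sqrt (2 / π) * Real.sqrt x₂ * Real.sqrt (Real.sqrt C) with hKdef
  have hterm : ∀ n : ℕ,
      Real.sqrt (2 / π) * ((-1) ^ n * B ^ n * k ^ (2 * n) / n.factorial) * (2:ℝ) ^ (-(n:ℝ)) *
        x₂ ^ ((n:ℝ) + 1/2) * C ^ ((1:ℝ)/4 - (n:ℝ)/2) * besselK ((n:ℝ) - 1/2) z
      = K * (a ^ n / n.factorial * besselK ((n:ℝ) - 1/2) z) := by
    intro n
    have h2 : (2:ℝ) ^ (-(n:ℝ)) = ((2:ℝ) ^ n)⁻¹ := by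
      rw [Real.rpow_neg (by norm_num), Real.rpow_natCast]
    have hx2 : x₂ ^ ((n:ℝ) + 1/2) = x₂ ^ n * Real.sqrt x₂ := by
      rw [Real.rpow_add hx, Real.rpow_natCast, Real.sqrt_eq_rpow]
    have hC4 : C ^ ((1:ℝ)/4 - (n:ℝ)/2) = Real.sqrt (Real.sqrt C) / (Real.sqrt C) ^ n := by
      rw [Real.rpow_sub hC]
      congr 1
      · rw [show ((1:ℝ)/4) = 1/2 * (1/2) by norm_num, Real.rpow_mul hC.le,
          ← Real.sqrt_eq_rpow, ← Real.sqrt_eq_rpow]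
      · rw [show ((n:ℝ)/2) = 1/2 * (n:ℝ) by ring, Real.rpow_mul hC.le,
          ← Real.sqrt_eq_rpow, Real.rpow_natCast]
    have han : a ^ n = (-1) ^ n * B ^ n * k ^ (2*n) * x₂ ^ n / ((2:ℝ)^n * (Real.sqrt C)^n) := by
      rw [hadef, div_pow, neg_pow, mul_pow, mul_pow, mul_pow, pow_mul]
      ring
    rw [h2, hx2, hC4, han, hKdef]
    have hfacne : (n.factorial : ℝ) ≠ 0 := Nat.cast_ne_zero.2 n.factorial_ne_zero
    have h2n : ((2:ℝ)^n) ≠ 0 := by positivity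
    have hsCn : ((Real.sqrt C)^n) ≠ 0 := by positivity
    field_simp
  rw [tsum_congr hterm, tsum_mul_left]
  have hsum2 : (∑' n : ℕ, a ^ n / n.factorial * besselK ((n:ℝ) - 1/2) z)
      = (1/2) * (Real.sqrt (π / q) * Real.exp (-2 * Real.sqrt ((q - a) * q))) := by
    rw [← hinterchange, ← tsum_mul_left]
    apply tsum_congr
    intro n
    rw [hFn_int n]
    ring
  rw [hsum2]
  -- final numeric identities
  have hπ : (0:ℝ) < π := Real.pi_pos
  have hKq : K * Real.sqrt (π / q) = 2 := by
    have hKpos : 0 < K * Real.sqrt (π / q) := by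
      rw [hKdef]
      have h1 : 0 < Real.sqrt (2/π) := Real.sqrt_pos.2 (by positivity)
      have h2 : 0 < Real.sqrt x₂ := Real.sqrt_pos.2 hx
      have h3 : 0 < Real.sqrt (Real.sqrt C) := Real.sqrt_pos.2 hsC
      have h4 : 0 < Real.sqrt (π / q) := Real.sqrt_pos.2 (by positivity)
      positivity
    have hsq : (K * Real.sqrt (π / q))^2 = 4 := by
      rw [hKdef, mul_pow, mul_pow, mul_pow,
        Real.sq_sqrt (by positivity : (0:ℝ) ≤ 2/π), Real.sq_sqrt hx.le,
        Real.sq_sqrt (Real.sqrt_nonneg C), Real.sq_sqrt (by positivity : (0:ℝ) ≤ π/q),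
        hqval]
      field_simp
      ring
    have h0 : (K * Real.sqrt (π / q) - 2) * (K * Real.sqrt (π / q) + 2) = 0 := by
      nlinarith [hsq]
    rcases mul_eq_zero.1 h0 with h | h
    · linarith
    · linarith
  have hpq : Real.sqrt ((q - a) * q) = x₂ * Real.sqrt (B * k ^ 2 + C) / 2 := by
    have hBC : Real.sqrt (B * k ^ 2 + C) ^ 2 = B * k ^ 2 + C := Real.sq_sqrt (by positivity)
    have h1 : (q - a) * q = (x₂ * Real.sqrt (B * k ^ 2 + C) / 2)^2 := by
      rw [hqval, hadef]
      field_simp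
      linear_combination hCC - hBC
    rw [h1, Real.sqrt_sq (by positivity)]
  rw [hpq,
    show -2 * (x₂ * Real.sqrt (B * k ^ 2 + C) / 2) = -x₂ * Real.sqrt (B * k ^ 2 + C) by ring,
    show K * ((1/2) * (Real.sqrt (π / q) *
        Real.exp (-x₂ * Real.sqrt (B * k ^ 2 + C))))
      = (K * Real.sqrt (π / q)) * Real.exp (-x₂ * Real.sqrt (B * k ^ 2 + C)) / 2 by ring,
    hKq]
  ring
end
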